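/- Let T be a tree on n vertices and S a global defensive alliance with |S| = k. Then k ≥ (n+2)/4, i.e., 4k ≥ n + 2. (This follows from 0 ≤ |E_Y| ≤ 2k − n/2 − 1.) -/

import Mathlib

open SimpleGraph Finset
open scoped Classical

/-- The closed neighborhood `N[v]` of a vertex `v`. -/
noncomputable def closedNbhd {V : Type*} [Fintype V] (G : SimpleGraph V) (v : V) : Finset V :=
  insert v (Finset.univ.filter (fun u => G.Adj v u))

/-- `S` is a dominating set: every vertex outside `S` has a neighbor in `S`. -/
def Dominating {V : Type*} [Fintype V] (G : SimpleGraph V) (S : Finset V) : Prop :=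
  ∀ v, v ∉ S → ∃ u ∈ S, G.Adj v u

/-- `S` is a global defensive alliance. -/
def GlobalDefensiveAlliance {V : Type*} [Fintype V] (G : SimpleGraph V) (S : Finset V) : Prop :=
  Dominating G S ∧ ∀ v ∈ S, (closedNbhd G v \ S).card ≤ (closedNbhd G v ∩ S).card

/-- `S` is a global offensive alliance. -/
def GlobalOffensiveAlliance {V : Type*} [Fintype V] (G : SimpleGraph V) (S : Finset V) : Prop :=
  Dominating G S ∧ ∀ v, v ∉ S → (∃ u ∈ S, G.Adj v u) →
    (closedNbhd G v \ S).card ≤ (closedNbhd G v ∩ S).card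

/-- Edges with both endpoints in `S`. -/
noncomputable def edgesInside {V : Type*} [Fintype V] (G : SimpleGraph V) (S : Finset V) :
    Finset (Sym2 V) :=
  G.edgeFinset.filter (fun e => ∀ x ∈ e, x ∈ S)

/-- Edges with both endpoints outside `S`. -/
noncomputable def edgesOutside {V : Type*} [Fintype V] (G : SimpleGraph V) (S : Finset V) :
    Finset (Sym2 V) :=
  G.edgeFinset.filter (fun e => ∀ x ∈ e, x ∉ S)

/-- Edges with exactly one endpoint in `S`. -/
noncomputable def edgesBetween {V : Type*} [Fintype V] (G : SimpleGraph V) (S : Finset V) :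
    Finset (Sym2 V) :=
  G.edgeFinset.filter (fun e => (∃ x ∈ e, x ∈ S) ∧ (∃ x ∈ e, x ∉ S))

/-- The global defensive alliance number `γ_a(G)`. -/
noncomputable def gammaA {V : Type*} [Fintype V] (G : SimpleGraph V) : ℕ :=
  sInf {k | ∃ S : Finset V, GlobalDefensiveAlliance G S ∧ S.card = k}

/-- The global offensive alliance number `γ_o(G)`. -/
noncomputable def gammaO {V : Type*} [Fintype V] (G : SimpleGraph V) : ℕ :=
  sInf {k | ∃ S : Finset V, GlobalOffensiveAlliance G S ∧ S.card = k}

/-- For a global defensive alliance S of size k in a tree on n vertices, 4k ≥ n + 2. -/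
theorem stmt_17 {V : Type*} [Fintype V] (G : SimpleGraph V) (hT : G.IsTree)
    (S : Finset V) (hS : GlobalDefensiveAlliance G S) (k : ℕ) (hk : S.card = k) :
    Fintype.card V + 2 ≤ 4 * k := by
  classical
  set n := Fintype.card V with hn
  set fOut : V → Finset V := fun v => Finset.univ.filter (fun u => G.Adj v u ∧ u ∉ S) with hfOut
  set fIn : V → Finset V := fun v => Finset.univ.filter (fun u => G.Adj v u ∧ u ∈ S) with hfIn
  set A : Finset (V × V) := S.biUnion (fun v => (fIn v).image (fun u => (v, u))) with hAdef
  set B : Finset (V × V) := S.biUnion (fun v => (fOut v).image (fun u => (v, u))) with hBdef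
  -- membership characterisations
  have memA : ∀ p : V × V, p ∈ A ↔ p.1 ∈ S ∧ p.2 ∈ S ∧ G.Adj p.1 p.2 := by
    intro p
    simp only [hAdef, hfIn, Finset.mem_biUnion, Finset.mem_image, Finset.mem_filter,
      Finset.mem_univ, true_and]
    constructor
    · rintro ⟨v, hv, u, ⟨hadj, huS⟩, rfl⟩; exact ⟨hv, huS, hadj⟩
    · rintro ⟨h1, h2, h3⟩; exact ⟨p.1, h1, p.2, ⟨h3, h2⟩, rfl⟩
  have memB : ∀ p : V × V, p ∈ B ↔ p.1 ∈ S ∧ p.2 ∉ S ∧ G.Adj p.1 p.2 := by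
    intro p
    simp only [hBdef, hfOut, Finset.mem_biUnion, Finset.mem_image, Finset.mem_filter,
      Finset.mem_univ, true_and]
    constructor
    · rintro ⟨v, hv, u, ⟨hadj, huS⟩, rfl⟩; exact ⟨hv, huS, hadj⟩
    · rintro ⟨h1, h2, h3⟩; exact ⟨p.1, h1, p.2, ⟨h3, h2⟩, rfl⟩
  have hdisj : ∀ f : V → Finset V, ∀ v ∈ S, ∀ w ∈ S, v ≠ w →
      Disjoint ((f v).image (fun u => (v, u))) ((f w).image (fun u => (w, u))) := by
    intro f v _ w _ hvw
    rw [Finset.disjoint_left]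
    rintro p hp hq
    obtain ⟨u, _, rfl⟩ := Finset.mem_image.mp hp
    obtain ⟨u', _, h⟩ := Finset.mem_image.mp hq
    exact hvw (congrArg Prod.fst h).symm
  have hAcard : A.card = ∑ v ∈ S, (fIn v).card := by
    rw [hAdef, Finset.card_biUnion (hdisj fIn)]
    exact Finset.sum_congr rfl fun v _ =>
      Finset.card_image_of_injective _ (fun a b h => (congrArg Prod.snd h))
  have hBcard : B.card = ∑ v ∈ S, (fOut v).card := by
    rw [hBdef, Finset.card_biUnion (hdisj fOut)]
    exact Finset.sum_congr rfl fun v _ =>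
      Finset.card_image_of_injective _ (fun a b h => (congrArg Prod.snd h))
  -- the alliance condition per vertex
  have hvert : ∀ v ∈ S, (fOut v).card ≤ (fIn v).card + 1 := by
    intro v hv
    have h := hS.2 v hv
    have e1 : closedNbhd G v \ S = fOut v := by
      ext u
      simp only [closedNbhd, hfOut, Finset.mem_sdiff, Finset.mem_insert, Finset.mem_filter,
        Finset.mem_univ, true_and]
      constructor
      · rintro ⟨h1 | h1, h2⟩
        · exact absurd (h1 ▸ hv) h2
        · exact ⟨h1, h2⟩
      · rintro ⟨h1, h2⟩; exact ⟨Or.inr h1, h2⟩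
    have e2 : closedNbhd G v ∩ S = insert v (fIn v) := by
      ext u
      simp only [closedNbhd, hfIn, Finset.mem_inter, Finset.mem_insert, Finset.mem_filter,
        Finset.mem_univ, true_and]
      constructor
      · rintro ⟨h1 | h1, h2⟩
        · exact Or.inl h1
        · exact Or.inr ⟨h1, h2⟩
      · rintro (rfl | ⟨h1, h2⟩)
        · exact ⟨Or.inl rfl, hv⟩
        · exact ⟨Or.inr h1, h2⟩
    have hvnotin : v ∉ fIn v := by
      simp [hfIn, G.irrefl]
    rw [e1, e2, Finset.card_insert_of_notMem hvnotin] at h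
    exact h
  -- B ≤ A + k
  have hBA : B.card ≤ A.card + k := by
    rw [hBcard, hAcard, ← hk]
    calc ∑ v ∈ S, (fOut v).card ≤ ∑ v ∈ S, ((fIn v).card + 1) :=
          Finset.sum_le_sum hvert
      _ = (∑ v ∈ S, (fIn v).card) + S.card := by
          rw [Finset.sum_add_distrib, Finset.sum_const, smul_eq_mul, mul_one]
  -- handshake: A + 2B ≤ 2 * edges
  set D : Finset (V × V) :=
    Finset.univ.biUnion (fun v => (Finset.univ.filter (G.Adj v)).image (fun u => (v, u)))
    with hDdef
  have memD : ∀ p : V × V, p ∈ D ↔ G.Adj p.1 p.2 := by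
    intro p
    simp only [hDdef, Finset.mem_biUnion, Finset.mem_image, Finset.mem_filter,
      Finset.mem_univ, true_and]
    constructor
    · rintro ⟨v, u, hadj, rfl⟩; exact hadj
    · intro h; exact ⟨p.1, p.2, h, rfl⟩
  have hDcard : D.card = 2 * G.edgeFinset.card := by
    rw [hDdef, Finset.card_biUnion]
    · rw [← G.sum_degrees_eq_twice_card_edges]
      refine Finset.sum_congr rfl fun v _ => ?_
      rw [Finset.card_image_of_injective _ (fun a b h => (congrArg Prod.snd h))]
      rw [← SimpleGraph.neighborFinset_eq_filter, SimpleGraph.degree]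
    · intro v _ w _ hvw
      rw [Function.onFun, Finset.disjoint_left]
      rintro p hp hq
      obtain ⟨u, _, rfl⟩ := Finset.mem_image.mp hp
      obtain ⟨u', _, h⟩ := Finset.mem_image.mp hq
      exact hvw (congrArg Prod.fst h).symm
  set Bs : Finset (V × V) := B.image Prod.swap with hBsdef
  have hBscard : Bs.card = B.card :=
    Finset.card_image_of_injective _ Prod.swap_injective
  have memBs : ∀ p : V × V, p ∈ Bs ↔ p.1 ∉ S ∧ p.2 ∈ S ∧ G.Adj p.1 p.2 := by
    intro p
    simp only [hBsdef, Finset.mem_image]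
    constructor
    · rintro ⟨q, hq, rfl⟩
      obtain ⟨h1, h2, h3⟩ := (memB q).mp hq
      exact ⟨h2, h1, h3.symm⟩
    · rintro ⟨h1, h2, h3⟩
      exact ⟨p.swap, (memB p.swap).mpr ⟨h2, h1, h3.symm⟩, Prod.swap_swap p⟩
  have hsub : A ∪ B ∪ Bs ⊆ D := by
    intro p hp
    rw [memD]
    rcases Finset.mem_union.mp hp with hp | hp
    · rcases Finset.mem_union.mp hp with hp | hp
      · exact ((memA p).mp hp).2.2
      · exact ((memB p).mp hp).2.2
    · exact ((memBs p).mp hp).2.2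
  have hdAB : Disjoint A B := by
    rw [Finset.disjoint_left]
    intro p hp hq
    exact ((memB p).mp hq).2.1 ((memA p).mp hp).2.1
  have hdABBs : Disjoint (A ∪ B) Bs := by
    rw [Finset.disjoint_left]
    intro p hp hq
    have h1 : p.1 ∉ S := ((memBs p).mp hq).1
    rcases Finset.mem_union.mp hp with hp | hp
    · exact h1 ((memA p).mp hp).1
    · exact h1 ((memB p).mp hp).1
  have hcount : A.card + B.card + B.card ≤ 2 * G.edgeFinset.card := by
    have := Finset.card_le_card hsub
    rwa [Finset.card_union_of_disjoint hdABBs, Finset.card_union_of_disjoint hdAB,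
      hBscard, hDcard] at this
  -- domination: |Sᶜ| ≤ |B|
  choose! fch hfch1 hfch2 using hS.1
  have hdom : Sᶜ.card ≤ B.card := by
    apply Finset.card_le_card_of_injOn (fun v => (fch v, v))
    · intro v hv
      have hv' : v ∉ S := Finset.mem_compl.mp hv
      exact (memB _).mpr ⟨hfch1 v hv', hv', (hfch2 v hv').symm⟩
    · intro a _ b _ h
      exact congrArg Prod.snd h
  have hcompl : Sᶜ.card + S.card = n := Finset.card_compl_add_card S
  have htree : G.edgeFinset.card + 1 = n := hT.card_edgeFinset
  omega
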